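/- The matrix S = I − M_c⁻¹ P M is idempotent: S² = S. -/

import Mathlib

open Matrix

theorem S_idempotent {n : ℕ}
    (M P : Matrix (Fin n) (Fin n) ℝ) (hM : M.PosDef)
    (hP : P * P = P) (hPt : Pᵀ = P) (ν : ℝ) (hν : 0 < ν)
    (Mc S : Matrix (Fin n) (Fin n) ℝ)
    (hMc : Mc = P * M * P + ν • (1 - P)) (hS : S = 1 - Mc⁻¹ * P * M) :
    S * S = S := by
  -- Mc is positive definite, hence invertible
  have hMsymm : Mᵀ = M := hM.1
  have hQ : (1 - P) * (1 - P) = 1 - P := by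
    simp [mul_sub, sub_mul, hP]
  have hQt : (1 - P)ᵀ = 1 - P := by
    simp [transpose_sub, hPt]
  have hMcPD : Mc.PosDef := by
    refine posDef_iff_dotProduct_mulVec.mpr ⟨?_, ?_⟩
    · show Mcᵀ = Mc
      rw [hMc]
      simp [transpose_add, transpose_mul, transpose_smul, hPt, hQt, hMsymm,
        Matrix.mul_assoc]
    · intro x hx
      have hsx : star x = x := by simp
      rw [hsx, hMc]
      have e1 : x ⬝ᵥ ((P * M * P) *ᵥ x) = (P *ᵥ x) ⬝ᵥ (M *ᵥ (P *ᵥ x)) := by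
        rw [← mulVec_mulVec, ← mulVec_mulVec, dotProduct_mulVec x P,
          ← mulVec_transpose, hPt]
      have e2 : x ⬝ᵥ ((1 - P) *ᵥ x) = ((1 - P) *ᵥ x) ⬝ᵥ ((1 - P) *ᵥ x) := by
        conv_lhs => rw [← hQ, ← mulVec_mulVec, dotProduct_mulVec x,
          ← mulVec_transpose, hQt]
      rw [add_mulVec, dotProduct_add, Matrix.smul_mulVec, dotProduct_smul,
        e1, smul_eq_mul, e2]
      by_cases hy : P *ᵥ x = 0
      · have hz : (1 - P) *ᵥ x = x := by
          rw [sub_mulVec, hy, one_mulVec, sub_zero]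
        rw [hy, hz]
        have hpos : (0:ℝ) < x ⬝ᵥ x := by
          have h0 : (0:ℝ) ≤ x ⬝ᵥ x := by simpa using dotProduct_self_star_nonneg x
          rcases lt_or_eq_of_le h0 with h | h
          · exact h
          · exact absurd (dotProduct_self_eq_zero.mp h.symm) hx
        simp only [mulVec_zero, dotProduct_zero, zero_add]
        positivity
      · have h1 : 0 < (P *ᵥ x) ⬝ᵥ (M *ᵥ (P *ᵥ x)) := by
          have := hM.dotProduct_mulVec_pos hy
          simpa using this
        have h2 : 0 ≤ ((1 - P) *ᵥ x) ⬝ᵥ ((1 - P) *ᵥ x) := by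
          simpa using dotProduct_self_star_nonneg ((1 - P) *ᵥ x)
        nlinarith
  have hU : IsUnit Mc.det := hMcPD.det_pos.ne'.isUnit
  have hinv1 : Mc⁻¹ * Mc = 1 := nonsing_inv_mul Mc hU
  have hinv2 : Mc * Mc⁻¹ = 1 := mul_nonsing_inv Mc hU
  -- Mc commutes with P
  have hPP : ∀ X : Matrix (Fin n) (Fin n) ℝ, P * (P * X) = P * X := fun X => by
    rw [← Matrix.mul_assoc, hP]
  have hMcP : Mc * P = P * M * P := by
    rw [hMc]
    simp [add_mul, sub_mul, Matrix.smul_mul, Matrix.mul_assoc, hP]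
  have hPMc : P * Mc = P * M * P := by
    rw [hMc]
    simp [mul_add, mul_sub, Matrix.mul_smul, Matrix.mul_assoc, hPP, hP]
  have hcomm : Mc * P = P * Mc := by rw [hMcP, hPMc]
  have hinvP : Mc⁻¹ * P = P * Mc⁻¹ := by
    calc Mc⁻¹ * P = Mc⁻¹ * P * (Mc * Mc⁻¹) := by rw [hinv2, Matrix.mul_one]
    _ = Mc⁻¹ * (P * Mc) * Mc⁻¹ := by simp [Matrix.mul_assoc]
    _ = Mc⁻¹ * (Mc * P) * Mc⁻¹ := by rw [hcomm]
    _ = P * Mc⁻¹ := by rw [← Matrix.mul_assoc, Matrix.mul_assoc Mc⁻¹, ← Matrix.mul_assoc, hinv1, Matrix.one_mul]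
  have key : P * M * Mc⁻¹ * P = P := by
    calc P * M * Mc⁻¹ * P = P * M * (Mc⁻¹ * P) := by rw [Matrix.mul_assoc]
    _ = P * M * P * Mc⁻¹ := by rw [hinvP]; simp [Matrix.mul_assoc]
    _ = Mc * P * Mc⁻¹ := by rw [hMcP]
    _ = Mc * Mc⁻¹ * P := by rw [Matrix.mul_assoc, ← hinvP, Matrix.mul_assoc]
    _ = P := by rw [hinv2, Matrix.one_mul]
  have hAA : (Mc⁻¹ * P * M) * (Mc⁻¹ * P * M) = Mc⁻¹ * P * M := by
    calc (Mc⁻¹ * P * M) * (Mc⁻¹ * P * M)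
        = Mc⁻¹ * (P * M * Mc⁻¹ * P) * M := by simp only [Matrix.mul_assoc]
    _ = Mc⁻¹ * P * M := by rw [key, Matrix.mul_assoc]
  rw [hS]
  simp only [sub_mul, mul_sub, Matrix.one_mul, Matrix.mul_one, hAA]
  abel
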